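/- arXiv:2403.15292 — 3 statements merged into one kernel-verified Lean document; each statement's English description precedes it below -/
import Mathlib

section
/- Let A ∈ ℂ^{n×n} be invertible and M ∈ ℂ^{n×n} Hermitian invertible. Define E = D − M A^{-1} M and G = M A^{-1} M A^{-*} M where D ∈ ℂ^{n×n}. Then trace(E* G^{-1} E) = trace((M − A M^{-1} D)* M^{-1} (M − A M^{-1} D)). -/
open Matrix

/-- Algebraic identity behind the convex reduced formulation: with
`E = D - M A⁻¹ M` and `G = M A⁻¹ M A⁻* M`, one has
`trace(E* G⁻¹ E) = trace((M - A M⁻¹ D)* M⁻¹ (M - A M⁻¹ D))`. -/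
theorem stmt_6 {n : ℕ} (A M D : Matrix (Fin n) (Fin n) ℂ)
    (hA : IsUnit A.det) (hM : M.IsHermitian) (hMinv : IsUnit M.det)
    (E G : Matrix (Fin n) (Fin n) ℂ)
    (hE : E = D - M * A⁻¹ * M)
    (hG : G = M * A⁻¹ * M * (Aᴴ)⁻¹ * M) :
    (Eᴴ * G⁻¹ * E).trace
      = ((M - A * M⁻¹ * D)ᴴ * M⁻¹ * (M - A * M⁻¹ * D)).trace := by
  have hAH : IsUnit (Aᴴ).det := by
    rw [Matrix.det_conjTranspose]; exact hA.star
  haveI := A.invertibleOfIsUnitDet hA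
  haveI := M.invertibleOfIsUnitDet hMinv
  haveI := (Aᴴ).invertibleOfIsUnitDet hAH
  set F := M - A * M⁻¹ * D with hF
  have hEF : E = -(M * A⁻¹ * F) := by
    rw [hE, hF]
    simp [Matrix.mul_sub, mul_assoc, Matrix.inv_mul_cancel_left_of_invertible,
      Matrix.mul_inv_cancel_left_of_invertible]
  have hGinv : G⁻¹ = M⁻¹ * Aᴴ * M⁻¹ * A * M⁻¹ := by
    rw [hG]
    simp only [Matrix.mul_inv_rev, Matrix.inv_inv_of_invertible, mul_assoc]
  have key : Eᴴ * G⁻¹ * E = Fᴴ * M⁻¹ * F := by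
    rw [hEF, hGinv]
    simp only [Matrix.conjTranspose_neg, Matrix.conjTranspose_mul,
      Matrix.conjTranspose_nonsing_inv, hM.eq, Matrix.neg_mul, Matrix.mul_neg,
      neg_neg, mul_assoc, Matrix.inv_mul_cancel_left_of_invertible,
      Matrix.mul_inv_cancel_left_of_invertible]
  rw [key, hF]
end

section
/- Let G ∈ ℂ^{n×n} be Hermitian positive definite and e ∈ ℂ^n. For ρ > 0, the solution α of (G + ρI)α = e satisfies (1/2)‖Gα − e‖² + (ρ/2)α*Gα = (1/2) e*(I + ρ^{-1}G)^{-1} e. -/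
open Matrix Finset
open scoped ComplexOrder

/-- Woodbury-type identity at the optimum: if `(G + ρ I) α = e` with `G` Hermitian
positive definite and `ρ > 0`, then
`(1/2)‖Gα - e‖² + (ρ/2) α* G α = (1/2) e* (I + ρ⁻¹ G)⁻¹ e`. -/
theorem stmt_8 {n : ℕ} (G : Matrix (Fin n) (Fin n) ℂ) (hG : G.PosDef)
    (e : Fin n → ℂ) (ρ : ℝ) (hρ : 0 < ρ)
    (α : Fin n → ℂ) (hα : (G + (ρ : ℂ) • (1 : Matrix (Fin n) (Fin n) ℂ)) *ᵥ α = e) :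
    (1 / 2 : ℂ) * (∑ i, (‖(G *ᵥ α - e) i‖ : ℂ) ^ 2)
        + ((ρ : ℂ) / 2) * (star α ⬝ᵥ (G *ᵥ α))
      = (1 / 2) * (star e ⬝ᵥ ((1 + (ρ : ℂ)⁻¹ • G)⁻¹ *ᵥ e)) := by
  set A : Matrix (Fin n) (Fin n) ℂ := G + (ρ : ℂ) • 1 with hAdef
  have hρC : (ρ : ℂ) ≠ 0 := by exact_mod_cast hρ.ne'
  have hAposdef : A.PosDef := by
    refine hG.add_posSemidef (posSemidef_iff_dotProduct_mulVec.2 ⟨?_, fun x => ?_⟩)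
    · simp [Matrix.IsHermitian]
    · have h1 : star x ⬝ᵥ ((ρ : ℂ) • (1 : Matrix (Fin n) (Fin n) ℂ)) *ᵥ x
          = (ρ : ℂ) * (star x ⬝ᵥ x) := by
        simp [Matrix.smul_mulVec, Matrix.one_mulVec, dotProduct_smul]
      rw [h1]
      exact mul_nonneg (by exact_mod_cast hρ.le) (dotProduct_star_self_nonneg x)
  have hAinv := hAposdef.isUnit
  -- Gα - e = -(ρ • α)
  have h1 : G *ᵥ α - e = -((ρ : ℂ) • α) := by
    rw [← hα, hAdef, Matrix.add_mulVec, Matrix.smul_mulVec, Matrix.one_mulVec]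
    abel
  -- sum of squared norms
  have hsum : (∑ i, (‖(G *ᵥ α - e) i‖ : ℂ) ^ 2) = (ρ : ℂ) ^ 2 * (star α ⬝ᵥ α) := by
    rw [h1]
    simp only [dotProduct, Pi.star_apply]
    rw [Finset.mul_sum]
    refine Finset.sum_congr rfl fun i _ => ?_
    simp only [Pi.neg_apply, Pi.smul_apply, smul_eq_mul, norm_neg, norm_mul,
      Complex.norm_real, Real.norm_eq_abs, abs_of_pos hρ]
    push_cast
    rw [mul_pow]
    have : (‖α i‖ : ℂ) ^ 2 = (starRingEnd ℂ) (α i) * α i := by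
      rw [← Complex.normSq_eq_conj_mul_self]
      rw [Complex.normSq_eq_norm_sq]
      push_cast
      rfl
    rw [this, RCLike.star_def]
    try ring
  -- α* G α
  have hGα : G *ᵥ α = e - (ρ : ℂ) • α := by
    have := h1
    rw [sub_eq_iff_eq_add] at this
    rw [this]; abel
  have h2 : star α ⬝ᵥ (G *ᵥ α) = star α ⬝ᵥ e - (ρ : ℂ) * (star α ⬝ᵥ α) := by
    rw [hGα, dotProduct_sub, dotProduct_smul, smul_eq_mul]
  -- the inverse matrix
  have hscale : (1 : Matrix (Fin n) (Fin n) ℂ) + (ρ : ℂ)⁻¹ • G = (ρ : ℂ)⁻¹ • A := by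
    rw [hAdef, smul_add, smul_smul, inv_mul_cancel₀ hρC, one_smul, add_comm]
  have hinve : ((1 : Matrix (Fin n) (Fin n) ℂ) + (ρ : ℂ)⁻¹ • G)⁻¹ *ᵥ e = (ρ : ℂ) • α := by
    have hAα : A⁻¹ *ᵥ e = α := by
      rw [← hα, Matrix.mulVec_mulVec, Matrix.nonsing_inv_mul A (Matrix.isUnit_iff_isUnit_det A |>.1 hAinv), Matrix.one_mulVec]
    haveI : Invertible ((ρ : ℂ)⁻¹) := invertibleOfNonzero (inv_ne_zero hρC)
    rw [hscale, Matrix.inv_smul A ((ρ : ℂ)⁻¹) (Matrix.isUnit_iff_isUnit_det A |>.1 hAinv),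
      invOf_eq_inv, inv_inv, Matrix.smul_mulVec, hAα]
  -- symmetry: star α ⬝ᵥ e = star e ⬝ᵥ α
  have hsym : star α ⬝ᵥ e = star e ⬝ᵥ α := by
    rw [← hα, Matrix.star_mulVec, ← Matrix.dotProduct_mulVec,
      hAposdef.isHermitian.eq, Matrix.dotProduct_mulVec]
  rw [hsum, h2, hinve, dotProduct_smul, smul_eq_mul, ← hsym]
  ring
end

section
/- Let G(λ) be the Gram matrix with entries g_{ij}(λ) = ⟨u_i(λ), u_j(λ)⟩_U, where for each λ, u_i(λ) ∈ U satisfies ⟨u_i(λ), v⟩_U − λ⟨u_i(λ), v⟩_{L²} = P_i(v) for all v ∈ U (the weak Schrödinger equation with c-weighted inner product), and set d_{ij}(λ) = P_i(u_j(λ)) = ⟨p_i, u_j(λ)⟩_U. Assume λ ↦ u_i(λ) is differentiable into U. Then g_{ij}(λ) = d_{ij}(λ) + λ d'_{ij}(λ), where d'_{ij} is the derivative in λ. -/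
local notation "⟪" x ", " y "⟫" => @inner ℝ _ _ x y

/-- Data-driven Gram identity for the Schrödinger family: if
`⟨uᵢ(λ), v⟩_U - λ B(uᵢ(λ), v) = ⟨pᵢ, v⟩_U` for all `v` (weak Schrödinger equation,
`B` the symmetric `L²` pairing), `λ ↦ uᵢ(λ)` is differentiable, and
`d i j λ = ⟨pᵢ, uⱼ(λ)⟩_U`, then `g i j λ = ⟨uᵢ(λ), uⱼ(λ)⟩_U = d i j λ + λ d' i j λ`. -/
theorem stmt_14 {U : Type*} [NormedAddCommGroup U] [InnerProductSpace ℝ U]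
    [CompleteSpace U]
    (B : U →ₗ[ℝ] U →ₗ[ℝ] ℝ) (hBsymm : ∀ u v, B u v = B v u)
    {n : ℕ} (p : Fin n → U) (u : Fin n → ℝ → U) (u' : Fin n → ℝ → U)
    (hderiv : ∀ i lam, HasDerivAt (u i) (u' i lam) lam)
    (hweak : ∀ i lam (v : U), ⟪u i lam, v⟫ - lam * B (u i lam) v = ⟪p i, v⟫)
    (d : Fin n → Fin n → ℝ → ℝ) (hd : ∀ i j lam, d i j lam = ⟪p i, u j lam⟫) :
    ∀ i j lam, ⟪u i lam, u j lam⟫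
      = d i j lam + lam * deriv (fun mu => d i j mu) lam := by
  intro i j lam
  -- derivative of d i j
  have hdd : ∀ mu, HasDerivAt (fun t => d i j t) ⟪p i, u' j mu⟫ mu := by
    intro mu
    have h1 : HasDerivAt (fun t => ⟪p i, u j t⟫) (⟪p i, u' j mu⟫ + ⟪(0 : U), u j mu⟫) mu :=
      (hasDerivAt_const mu (p i)).inner ℝ (hderiv j mu)
    simp only [inner_zero_left, add_zero] at h1
    have : (fun t => d i j t) = fun t => ⟪p i, u j t⟫ := funext fun t => hd i j t
    rw [this]; exact h1
  have hderiv_eq : deriv (fun mu => d i j mu) lam = ⟪p i, u' j lam⟫ := (hdd lam).deriv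
  -- the two weak equations
  have eq1 : ∀ mu : ℝ, ⟪u i lam, u j mu⟫ - lam * B (u i lam) (u j mu) = d i j mu := by
    intro mu; rw [hd i j mu]; exact hweak i lam (u j mu)
  have hsym : (⟪p j, u i lam⟫ : ℝ) = d i j lam := by
    have h2 := hweak i lam (u j lam)
    have h3 := hweak j lam (u i lam)
    have hic : (⟪u j lam, u i lam⟫ : ℝ) = ⟪u i lam, u j lam⟫ := real_inner_comm _ _
    have hbc : B (u j lam) (u i lam) = B (u i lam) (u j lam) := hBsymm _ _
    rw [hd i j lam]
    linear_combination h2 - h3 + hic - lam * hbc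
  have eq2 : ∀ mu : ℝ, ⟪u i lam, u j mu⟫ - mu * B (u i lam) (u j mu) = d i j lam := by
    intro mu
    have h := hweak j mu (u i lam)
    have hic2 : (⟪u j mu, u i lam⟫ : ℝ) = ⟪u i lam, u j mu⟫ := real_inner_comm _ _
    have hbc2 : B (u j mu) (u i lam) = B (u i lam) (u j mu) := hBsymm _ _
    linear_combination h + hsym - hic2 + mu * hbc2
  -- difference quotient identity
  have key : ∀ mu : ℝ, mu ≠ lam →
      ⟪u i lam, u j mu⟫ = (mu * d i j mu - lam * d i j lam) / (mu - lam) := by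
    intro mu hmu
    have h1 := eq1 mu
    have h2 := eq2 mu
    have hne : mu - lam ≠ 0 := sub_ne_zero.mpr hmu
    rw [eq_div_iff hne]
    linear_combination mu * h1 - lam * h2
  -- limit of the quotient: derivative of mu * d i j mu
  have hh : HasDerivAt (fun mu => mu * d i j mu) (d i j lam + lam * ⟪p i, u' j lam⟫) lam := by
    have : HasDerivAt (fun mu => mu * d i j mu) (1 * d i j lam + lam * ⟪p i, u' j lam⟫) lam :=
      (hasDerivAt_id' lam).mul (hdd lam)
    simpa only [one_mul] using this
  have hslope : Filter.Tendsto (slope (fun mu => mu * d i j mu) lam) (nhdsWithin lam {lam}ᶜ)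
      (nhds (d i j lam + lam * ⟪p i, u' j lam⟫)) :=
    hasDerivAt_iff_tendsto_slope.mp hh
  -- F tends to the Gram entry
  have hF : Filter.Tendsto (fun mu => ⟪u i lam, u j mu⟫) (nhdsWithin lam {lam}ᶜ)
      (nhds ⟪u i lam, u j lam⟫) := by
    have : Filter.Tendsto (fun mu => ⟪u i lam, u j mu⟫) (nhds lam)
        (nhds ⟪u i lam, u j lam⟫) :=
      Filter.Tendsto.inner tendsto_const_nhds (hderiv j lam).continuousAt
    exact this.mono_left nhdsWithin_le_nhds
  -- F equals the slope on the punctured neighborhood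
  have heq : ∀ mu ∈ ({lam}ᶜ : Set ℝ),
      ⟪u i lam, u j mu⟫ = slope (fun mu => mu * d i j mu) lam mu := by
    intro mu hmu
    have hmu' : mu ≠ lam := hmu
    rw [key mu hmu', slope_def_field]
  have hF' : Filter.Tendsto (fun mu => ⟪u i lam, u j mu⟫) (nhdsWithin lam {lam}ᶜ)
      (nhds (d i j lam + lam * ⟪p i, u' j lam⟫)) := by
    refine hslope.congr' ?_
    filter_upwards [self_mem_nhdsWithin] with mu hmu
    exact (heq mu hmu).symm
  have : ⟪u i lam, u j lam⟫ = d i j lam + lam * ⟪p i, u' j lam⟫ :=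
    tendsto_nhds_unique hF hF'
  rw [this, hderiv_eq]
end
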